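/- Given observations y_{i,j} ∈ R^p for classes i = 1,...,c, the minimizers of F(μ_1,...,μ_c, Σ_w) = Σ_{i,j} (1/n)(y_{i,j}-μ_i)^T Σ_w^{-1}(y_{i,j}-μ_i) + ln|Σ_w| + Tr(α Ω Σ_w^{-1}) over μ_i ∈ R^p and Σ_w positive definite are μ̂_i = ȳ_i (the class sample means) and Σ̂_w = S_yy + α Ω, where S_yy = (1/n) Σ_{i,j} (y_{i,j}-ȳ_i)(y_{i,j}-ȳ_i)^T. Hence the penalized discriminant analysis criterion arg max_β β^T Σ̂_b β / (β^T(S_yy + αΩ)β) arises as the MAP estimate under the inverse-Wishart-type prior exp(-\tfrac12 Tr(αΩ Σ_w^{-1}))-penalty. -/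

import Mathlib

open Matrix BigOperators

lemma sum_dotProduct_left {m p : ℕ} (d : Fin m → Fin p → ℝ) (w : Fin p → ℝ) :
    ∑ j, d j ⬝ᵥ w = (∑ j, d j) ⬝ᵥ w := by
  simp [dotProduct, Finset.sum_apply, Finset.sum_mul]
  exact Finset.sum_comm

lemma sum_dotProduct_right {m p : ℕ} (w : Fin p → ℝ) (d : Fin m → Fin p → ℝ) :
    ∑ j, w ⬝ᵥ d j = w ⬝ᵥ (∑ j, d j) := by
  simp [dotProduct, Finset.sum_apply, Finset.mul_sum]
  exact Finset.sum_comm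

lemma trace_mul_vecMulVec {p : ℕ} (M : Matrix (Fin p) (Fin p) ℝ) (v : Fin p → ℝ) :
    (M * vecMulVec v v).trace = v ⬝ᵥ (M *ᵥ v) := by
  simp [Matrix.trace, Matrix.diag, Matrix.mul_apply, vecMulVec_apply, dotProduct, Matrix.mulVec,
    Finset.mul_sum]
  congr 1; ext i; congr 1; ext j; ring

lemma trace_eq_sum_eigenvalues {p : ℕ} {A : Matrix (Fin p) (Fin p) ℝ} (hA : A.IsHermitian) :
    A.trace = ∑ i, hA.eigenvalues i := by
  simpa using hA.trace_eq_sum_eigenvalues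

lemma trace_ge_of_psd {p : ℕ} {C : Matrix (Fin p) (Fin p) ℝ} (hC : C.PosSemidef)
    (hdet : 0 < C.det) : (p : ℝ) + Real.log C.det ≤ C.trace := by
  have hev : ∀ i, 0 < hC.1.eigenvalues i := by
    intro i
    rcases lt_or_eq_of_le (hC.eigenvalues_nonneg i) with h | h
    · exact h
    · exfalso
      have hd : C.det = ∏ i, (hC.1.eigenvalues i : ℝ) := hC.1.det_eq_prod_eigenvalues
      rw [Finset.prod_eq_zero (Finset.mem_univ i) (by exact_mod_cast h.symm)] at hd
      simp [hd] at hdet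
  have hdet' : C.det = ∏ i, hC.1.eigenvalues i := by
    simpa using hC.1.det_eq_prod_eigenvalues
  rw [trace_eq_sum_eigenvalues hC.1, hdet', Real.log_prod (fun i _ => (hev i).ne')]
  have : ∀ i ∈ Finset.univ, (1 : ℝ) + Real.log (hC.1.eigenvalues i) ≤ hC.1.eigenvalues i := by
    intro i _
    have := Real.log_le_sub_one_of_pos (hev i)
    linarith
  calc (p : ℝ) + ∑ i, Real.log (hC.1.eigenvalues i)
      = ∑ i : Fin p, ((1 : ℝ) + Real.log (hC.1.eigenvalues i)) := by
        rw [Finset.sum_add_distrib]; simp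
    _ ≤ ∑ i, hC.1.eigenvalues i := Finset.sum_le_sum this

open scoped MatrixOrder in
lemma key_trace_log {p : ℕ} {A S : Matrix (Fin p) (Fin p) ℝ} (hA : A.PosDef) (hS : S.PosDef) :
    (p : ℝ) + Real.log A.det ≤ (S⁻¹ * A).trace + Real.log S.det := by
  set R := CFC.sqrt A with hR
  have hRH : Rᴴ = R := (CFC.sqrt_nonneg A).posSemidef.1
  have hRR : R * R = A := CFC.sqrt_mul_sqrt_self A hA.posSemidef.nonneg
  have hC : (R * S⁻¹ * R).PosSemidef := by
    have := hS.inv.posSemidef.conjTranspose_mul_mul_same R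
    rwa [hRH] at this
  have htr : (R * S⁻¹ * R).trace = (S⁻¹ * A).trace := by
    rw [Matrix.mul_assoc, Matrix.trace_mul_comm, Matrix.mul_assoc, hRR]
  have hdetS : (0:ℝ) < S.det := hS.det_pos
  have hdetA : (0:ℝ) < A.det := hA.det_pos
  have hdetC : (R * S⁻¹ * R).det = A.det / S.det := by
    rw [Matrix.det_mul, Matrix.det_mul, Matrix.det_nonsing_inv, Ring.inverse_eq_inv']
    have : R.det * R.det = A.det := by rw [← Matrix.det_mul, hRR]
    field_simp
    linarith [this]
  have hpos : 0 < (R * S⁻¹ * R).det := by rw [hdetC]; positivity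
  have := trace_ge_of_psd hC hpos
  rw [htr, hdetC, Real.log_div hdetA.ne' hdetS.ne'] at this
  linarith

lemma sum_quad_mean_le {p m : ℕ} {M : Matrix (Fin p) (Fin p) ℝ} (hM : M.PosSemidef)
    (v : Fin m → Fin p → ℝ) (b μ : Fin p → ℝ)
    (hb : ∑ j, (v j - b) = 0) :
    ∑ j, (v j - b) ⬝ᵥ (M *ᵥ (v j - b)) ≤ ∑ j, (v j - μ) ⬝ᵥ (M *ᵥ (v j - μ)) := by
  have hexp : ∀ j, (v j - μ) ⬝ᵥ (M *ᵥ (v j - μ)) =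
      (v j - b) ⬝ᵥ (M *ᵥ (v j - b)) + (v j - b) ⬝ᵥ (M *ᵥ (b - μ))
        + ((b - μ) ᵥ* M) ⬝ᵥ (v j - b) + (b - μ) ⬝ᵥ (M *ᵥ (b - μ)) := by
    intro j
    have h1 : v j - μ = (v j - b) + (b - μ) := by abel
    rw [h1, Matrix.mulVec_add, add_dotProduct, dotProduct_add, dotProduct_add,
      ← Matrix.dotProduct_mulVec]
    ring
  rw [Finset.sum_congr rfl (fun j _ => hexp j)]
  simp only [Finset.sum_add_distrib]
  rw [sum_dotProduct_left (fun j => v j - b) (M *ᵥ (b - μ)), hb, zero_dotProduct]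
  have h2 : ∑ j, ((b - μ) ᵥ* M) ⬝ᵥ (v j - b) = 0 := by
    rw [sum_dotProduct_right, hb, dotProduct_zero]
  rw [h2]
  have h3 : 0 ≤ ∑ _j : Fin m, (b - μ) ⬝ᵥ (M *ᵥ (b - μ)) := by
    apply Finset.sum_nonneg
    intro j _
    simpa using hM.dotProduct_mulVec_nonneg (b - μ)
  linarith

/-- Penalized discriminant analysis as a MAP estimate: the class sample means
and `S_yy + αΩ` minimize the penalized negative log-posterior criterion. -/
theorem pda_map_minimizers {p c : ℕ}
    (ni : Fin c → ℕ) (hni : ∀ i, 0 < ni i)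
    (y : (i : Fin c) → Fin (ni i) → (Fin p → ℝ))
    (α : ℝ) (hα : 0 < α)
    (Ω : Matrix (Fin p) (Fin p) ℝ) (hΩsymm : Ω.IsSymm) (hΩ : Ω.PosSemidef)
    (ybar : Fin c → Fin p → ℝ)
    (hybar : ∀ i, ybar i = ((ni i : ℝ))⁻¹ • ∑ j, y i j)
    (Syy : Matrix (Fin p) (Fin p) ℝ)
    (hSyy : Syy = (((∑ i, ni i : ℕ) : ℝ))⁻¹ •
      ∑ i, ∑ j, Matrix.vecMulVec (y i j - ybar i) (y i j - ybar i))
    (hpd : (Syy + α • Ω).PosDef)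
    (F : (Fin c → Fin p → ℝ) → Matrix (Fin p) (Fin p) ℝ → ℝ)
    (hF : ∀ μ Sw, F μ Sw =
      (∑ i, ∑ j, (((∑ i, ni i : ℕ) : ℝ))⁻¹ *
          ((y i j - μ i) ⬝ᵥ (Sw⁻¹ *ᵥ (y i j - μ i))))
        + Real.log Sw.det + ((α • Ω) * Sw⁻¹).trace) :
    ∀ μ (Sw : Matrix (Fin p) (Fin p) ℝ), Sw.PosDef →
      F ybar (Syy + α • Ω) ≤ F μ Sw := by
  intro μ Sw hSw
  set nr : ℝ := ((∑ i, ni i : ℕ) : ℝ) with hnr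
  -- class deviations sum to zero
  have hzero : ∀ i, ∑ j, (y i j - ybar i) = 0 := by
    intro i
    rw [Finset.sum_sub_distrib, Finset.sum_const, Finset.card_univ, Fintype.card_fin,
      hybar i, ← Nat.cast_smul_eq_nsmul ℝ, smul_smul,
      mul_inv_cancel₀ (Nat.cast_pos.mpr (hni i)).ne', one_smul, sub_self]
  -- trace identity
  have key : ∀ M : Matrix (Fin p) (Fin p) ℝ,
      (∑ i, ∑ j, nr⁻¹ * ((y i j - ybar i) ⬝ᵥ (M *ᵥ (y i j - ybar i))))
        = (M * Syy).trace := by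
    intro M
    rw [hSyy, mul_smul_comm, Matrix.trace_smul, Matrix.mul_sum, Matrix.trace_sum]
    rw [smul_eq_mul, Finset.mul_sum]
    congr 1; ext i
    rw [Matrix.mul_sum, Matrix.trace_sum, Finset.mul_sum]
    congr 1; ext j
    rw [trace_mul_vecMulVec]
  -- Step 1 : F ybar Sw ≤ F μ Sw
  have step1 : F ybar Sw ≤ F μ Sw := by
    rw [hF, hF]
    apply add_le_add_left; apply add_le_add_left
    apply Finset.sum_le_sum
    intro i _
    rw [← Finset.mul_sum, ← Finset.mul_sum]
    exact mul_le_mul_of_nonneg_left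
      (sum_quad_mean_le hSw.inv.posSemidef (y i) (ybar i) (μ i) (hzero i))
      (inv_nonneg.mpr (Nat.cast_nonneg _))
  -- Step 2 : rewrite F ybar Sw
  have step2 : F ybar Sw = (Sw⁻¹ * (Syy + α • Ω)).trace + Real.log Sw.det := by
    rw [hF, key Sw⁻¹, Matrix.trace_mul_comm (α • Ω) Sw⁻¹, Matrix.mul_add, Matrix.trace_add]
    ring
  -- Step 3 : value at the minimizer
  have step3 : F ybar (Syy + α • Ω) = (p : ℝ) + Real.log (Syy + α • Ω).det := by
    rw [hF, key (Syy + α • Ω)⁻¹, Matrix.trace_mul_comm (α • Ω) (Syy + α • Ω)⁻¹]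
    have h1 : ((Syy + α • Ω)⁻¹ * Syy).trace + ((Syy + α • Ω)⁻¹ * (α • Ω)).trace = (p : ℝ) := by
      rw [← Matrix.trace_add, ← Matrix.mul_add,
        Matrix.nonsing_inv_mul _ hpd.det_pos.ne'.isUnit, Matrix.trace_one]
      simp
    linarith
  rw [step3]
  calc (p : ℝ) + Real.log (Syy + α • Ω).det
      ≤ (Sw⁻¹ * (Syy + α • Ω)).trace + Real.log Sw.det := key_trace_log hpd hSw
    _ = F ybar Sw := step2.symm
    _ ≤ F μ Sw := step1
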